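/- Assume μ satisfies Assumption (A) and let L be a nonempty compact subset of Ω⁺ with L ∩ S = ∅. Then there exists a constant C₀ > 0 such that for all z ∈ L and all sufficiently large n, the probability that log|p_n(z)| ≤ 1 is at most e^{−C₀ n}. -/

import Mathlib

open MeasureTheory ProbabilityTheory Filter Metric

/-- Logarithmic potential of a measure on ℂ. -/
noncomputable def logPot (μ : Measure ℂ) (z : ℂ) : ℝ :=
  ∫ w, Real.log ‖z - w‖ ∂μ

/-- Topological support of a measure on ℂ. -/
def msupport (μ : Measure ℂ) : Set ℂ :=
  {x : ℂ | ∀ U ∈ nhds x, 0 < μ U}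

/-- Assumption (A): for every compact `K`, `sup_{z ∈ K} ∫ (log|z-w|)² dμ(w) < ∞`. -/
def AssumptionA (μ : Measure ℂ) : Prop :=
  ∀ K : Set ℂ, IsCompact K → ∃ C : ℝ, ∀ z ∈ K,
    ∫⁻ w, ENNReal.ofReal ((Real.log ‖z - w‖) ^ 2) ∂μ ≤ ENNReal.ofReal C

/-- Assumption (D): `μ(B(z,r)) ≤ C rᵉ` for all `z` and `r > 0`. -/
def AssumptionD (μ : Measure ℂ) : Prop :=
  ∃ C : ℝ, ∃ ε : ℝ, 0 < ε ∧ ∀ z : ℂ, ∀ r : ℝ, 0 < r →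
    μ (Metric.ball z r) ≤ ENNReal.ofReal (C * r ^ ε)

/-- The filled unit lemniscate of `p_n(z) = ∏_{k<n} (z - X k ω)`. -/
def lemniscate {Ω : Type*} (X : ℕ → Ω → ℂ) (n : ℕ) (ω : Ω) : Set ℂ :=
  {z : ℂ | ‖∏ k ∈ Finset.range n, (z - X k ω)‖ < 1}

/-- Inradius of a planar set: the sup of radii of open disks contained in it (0 if none). -/
noncomputable def inradius (U : Set ℂ) : ℝ :=
  sSup {r : ℝ | 0 < r ∧ ∃ c : ℂ, Metric.ball c r ⊆ U}

set_option maxHeartbeats 1000000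

lemma exp_le_one_add_add_sq' {x : ℝ} (hx : |x| ≤ 1) : Real.exp x ≤ 1 + x + x ^ 2 := by
  have h := Real.exp_bound hx (n := 2) (by norm_num)
  have h2 := (abs_sub_le_iff.1 h).1
  simp [Finset.sum_range_succ] at h2
  nlinarith [sq_abs x, abs_nonneg x]

lemma abs_log_le' {a b y : ℝ} (ha : 0 < a) (hay : a ≤ y) (hyb : y ≤ b) :
    |Real.log y| ≤ max (-Real.log a) (Real.log b) := by
  have hy : 0 < y := ha.trans_le hay
  rw [abs_le]
  refine ⟨?_, le_max_of_le_right (Real.log_le_log hy hyb)⟩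
  have := Real.log_le_log ha hay
  have h2 : -max (-Real.log a) (Real.log b) ≤ Real.log a := by
    have := le_max_left (-Real.log a) (Real.log b); linarith
  linarith

lemma msupport_closed (μ : Measure ℂ) : IsClosed (msupport μ) := by
  rw [← isOpen_compl_iff, isOpen_iff_mem_nhds]
  intro x hx
  simp only [msupport, Set.mem_compl_iff, Set.mem_setOf_eq, not_forall] at hx
  obtain ⟨U, hU, hU0⟩ := hx
  have hU0' : μ U = 0 := by simpa using hU0
  obtain ⟨V, hVU, hVopen, hxV⟩ := _root_.mem_nhds_iff.1 hU
  filter_upwards [hVopen.mem_nhds hxV] with y hy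
  simp only [Set.mem_compl_iff, msupport, Set.mem_setOf_eq, not_forall]
  exact ⟨V, hVopen.mem_nhds hy, by simp [measure_mono_null hVU hU0']⟩

lemma msupport_compl_null (μ : Measure ℂ) : μ (msupport μ)ᶜ = 0 := by
  apply measure_null_of_locally_null
  intro x hx
  simp only [msupport, Set.mem_compl_iff, Set.mem_setOf_eq, not_forall] at hx
  obtain ⟨U, hU, hU0⟩ := hx
  exact ⟨U, mem_nhdsWithin_of_mem_nhds hU, by simpa using hU0⟩

theorem statement13
    {Ω : Type*} [MeasurableSpace Ω] (P : Measure Ω) [IsProbabilityMeasure P]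
    (μ : Measure ℂ) [IsProbabilityMeasure μ] (hS : IsCompact (msupport μ))
    (hA : AssumptionA μ)
    (X : ℕ → Ω → ℂ) (hmeas : ∀ i, Measurable (X i))
    (hid : ∀ i, Measure.map (X i) P = μ)
    (hindep : iIndepFun X P)
    (L : Set ℂ) (hL : IsCompact L) (hLne : L.Nonempty)
    (hLsub : L ⊆ {z : ℂ | 0 < logPot μ z}) (hLS : L ∩ msupport μ = ∅) :
    ∃ C₀ > (0 : ℝ), ∀ z ∈ L, ∀ᶠ n : ℕ in atTop,
      P {ω | Real.log ‖∏ k ∈ Finset.range n, (z - X k ω)‖ ≤ 1} ≤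
        ENNReal.ofReal (Real.exp (-C₀ * n)) := by
  set S := msupport μ with hSdef
  have hSnull : μ Sᶜ = 0 := msupport_compl_null μ
  have hSne : S.Nonempty := by
    rcases S.eq_empty_or_nonempty with h | h
    · exfalso
      have : μ Set.univ = 0 := by rw [← Set.compl_empty, ← h]; exact hSnull
      simp at this
    · exact h
  -- separation δ₀ and bound R
  have hdisj : ∀ z ∈ L, ∀ w ∈ S, z ≠ w := by
    intro z hz w hw h
    have : z ∈ L ∩ S := ⟨hz, h ▸ hw⟩
    simp [hLS] at this
  obtain ⟨p₀, hmem₀, hmin₀⟩ :=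
    (hL.prod hS).exists_isMinOn (hLne.prod hSne)
      (continuous_dist.continuousOn (s := L ×ˢ S))
  have hδ₀pos : 0 < dist p₀.1 p₀.2 :=
    dist_pos.2 (hdisj p₀.1 hmem₀.1 p₀.2 hmem₀.2)
  obtain ⟨R, hR⟩ := Metric.isBounded_iff.1 (hL.isBounded.union hS.isBounded)
  set δ : ℝ := min (dist p₀.1 p₀.2) 1 with hδdef
  set Rb : ℝ := max R 1 with hRdef
  have hδpos : 0 < δ := lt_min hδ₀pos one_pos
  have hδ1 : δ ≤ 1 := min_le_right _ _
  have hRb1 : 1 ≤ Rb := le_max_right _ _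
  have hsep : ∀ z ∈ L, ∀ w ∈ S, δ ≤ ‖z - w‖ ∧ ‖z - w‖ ≤ Rb := by
    intro z hz w hw
    have h1 : dist p₀.1 p₀.2 ≤ dist z w := isMinOn_iff.1 hmin₀ (z, w) (Set.mk_mem_prod hz hw)
    have h2 : dist z w ≤ R := hR (Set.mem_union_left _ hz) (Set.mem_union_right _ hw)
    rw [← Complex.dist_eq]
    exact ⟨le_trans (min_le_left _ _) h1, le_trans h2 (le_max_left _ _)⟩
  -- constants
  set M₀ : ℝ := max (-Real.log δ) (Real.log Rb) with hM₀def
  have hM₀nonneg : 0 ≤ M₀ := le_trans (Real.log_nonneg hRb1) (le_max_right _ _)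
  set M : ℝ := M₀ + 1 with hMdef
  have hMpos : 0 < M := by positivity
  have hM₀M : M₀ < M := by simp [hMdef]
  -- continuity and min of potential
  have hpotcont : ContinuousOn (logPot μ) L := by
    intro x₀ hx₀
    apply ContinuousAt.continuousWithinAt
    have hB : ∀ z ∈ ball x₀ (δ/2), ∀ w ∈ S,
        |Real.log (‖z - w‖)| ≤ max (-Real.log (δ/2)) (Real.log (Rb + 1)) := by
      intro z hz w hw
      obtain ⟨h1, h2⟩ := hsep x₀ hx₀ w hw
      have hd : dist z x₀ < δ/2 := mem_ball.1 hz
      have hzw1 : δ/2 ≤ ‖z - w‖ := by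
        have := dist_triangle x₀ z w
        rw [← Complex.dist_eq] at h1 ⊢
        have : dist x₀ w ≤ dist x₀ z + dist z w := dist_triangle _ _ _
        rw [dist_comm x₀ z] at this
        linarith
      have hzw2 : ‖z - w‖ ≤ Rb + 1 := by
        rw [← Complex.dist_eq] at h2 ⊢
        have : dist z w ≤ dist z x₀ + dist x₀ w := dist_triangle _ _ _
        linarith
      exact abs_log_le' (by positivity) hzw1 hzw2
    apply continuousAt_of_dominated
      (bound := fun _ => max (-Real.log (δ/2)) (Real.log (Rb + 1)))
    · filter_upwards with z
      exact (Real.measurable_log.comp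
        (continuous_norm.measurable.comp (measurable_const.sub measurable_id))).aestronglyMeasurable
    · filter_upwards [ball_mem_nhds x₀ (by positivity : (0:ℝ) < δ/2)] with z hz
      have : ∀ᵐ w ∂μ, w ∈ S := by
        rw [ae_iff]; exact hSnull
      filter_upwards [this] with w hw
      exact hB z hz w hw
    · exact integrable_const _
    · have : ∀ᵐ w ∂μ, w ∈ S := by rw [ae_iff]; exact hSnull
      filter_upwards [this] with w hw
      have hne : ‖x₀ - w‖ ≠ 0 :=
        ne_of_gt (lt_of_lt_of_le hδpos (hsep x₀ hx₀ w hw).1)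
      have hc : ContinuousAt (fun z => ‖z - w‖) x₀ :=
        (continuous_norm.comp (continuous_sub_right w)).continuousAt
      exact ContinuousAt.log hc hne
  obtain ⟨zm, hzm, hzmmin⟩ := hL.exists_isMinOn hLne hpotcont
  set m : ℝ := logPot μ zm with hmdef
  have hmpos : 0 < m := hLsub hzm
  -- choose t and C₀
  set t : ℝ := min (1/M) (m/(2*M^2)) with htdef
  have htpos : 0 < t := lt_min (by positivity) (by positivity)
  have htM : t * M₀ ≤ 1 := by
    calc t * M₀ ≤ (1/M) * M := by
          apply mul_le_mul (min_le_left _ _) hM₀M.le hM₀nonneg (by positivity)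
      _ = 1 := by field_simp
  have htm : t * M₀^2 ≤ m/2 := by
    have h1 : t ≤ m/(2*M^2) := min_le_right _ _
    have h2 : M₀^2 ≤ M^2 := by nlinarith
    calc t * M₀^2 ≤ (m/(2*M^2)) * M^2 := by
          apply mul_le_mul h1 h2 (by positivity) (by positivity)
      _ = m/2 := by field_simp
  refine ⟨t*m/4, by positivity, ?_⟩
  intro z hz
  -- the random variables Y k
  set Y : ℕ → Ω → ℝ := fun k ω => Real.log (‖z - X k ω‖) with hYdef
  have hYmeas : ∀ k, Measurable (Y k) := fun k =>
    Real.measurable_log.comp (continuous_norm.measurable.comp (measurable_const.sub (hmeas k)))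
  have hgood : ∀ k, ∀ᵐ ω ∂P, X k ω ∈ S := by
    intro k
    rw [ae_iff]
    have : {ω | ¬ X k ω ∈ S} = X k ⁻¹' Sᶜ := rfl
    rw [this, ← Measure.map_apply (hmeas k) (msupport_closed μ).isOpen_compl.measurableSet,
      hid k, hSnull]
  have hYbound : ∀ k, ∀ᵐ ω ∂P, δ ≤ ‖z - X k ω‖ ∧ ‖z - X k ω‖ ≤ Rb := by
    intro k
    filter_upwards [hgood k] with ω hω
    exact hsep z hz _ hω
  have hYM : ∀ k, ∀ᵐ ω ∂P, |Y k ω| ≤ M₀ := by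
    intro k
    filter_upwards [hYbound k] with ω ⟨h1, h2⟩
    exact abs_log_le' hδpos h1 h2
  have hYint : ∀ k, Integrable (Y k) P := by
    intro k
    exact Integrable.mono' (integrable_const M₀) (hYmeas k).aestronglyMeasurable (hYM k)
  have hY2int : ∀ k, Integrable (fun ω => (Y k ω)^2) P := by
    intro k
    refine Integrable.mono' (integrable_const (M₀^2))
      ((hYmeas k).pow_const 2).aestronglyMeasurable ?_
    filter_upwards [hYM k] with ω hω
    rw [Real.norm_eq_abs, abs_pow]
    exact pow_le_pow_left₀ (abs_nonneg _) hω 2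
  have hEY : ∀ k, ∫ ω, Y k ω ∂P = logPot μ z := by
    intro k
    rw [hYdef]
    have : logPot μ z = ∫ w, Real.log (‖z - w‖) ∂(Measure.map (X k) P) := by
      rw [hid k]; rfl
    rw [this, integral_map (hmeas k).aemeasurable]
    exact (Real.measurable_log.comp
      (continuous_norm.measurable.comp (measurable_const.sub measurable_id))).aestronglyMeasurable
  have hEYm : ∀ k, m ≤ ∫ ω, Y k ω ∂P := by
    intro k; rw [hEY k]; exact hzmmin hz
  have hEY2 : ∀ k, ∫ ω, (Y k ω)^2 ∂P ≤ M₀^2 := by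
    intro k
    have := integral_mono_ae (hY2int k) (integrable_const (M₀^2)) ?_
    · simpa using this
    · filter_upwards [hYM k] with ω hω
      rw [← sq_abs]
      exact pow_le_pow_left₀ (abs_nonneg _) hω 2
  -- exponential integrability
  have hexpint : ∀ k, Integrable (fun ω => Real.exp (-t * Y k ω)) P := by
    intro k
    refine Integrable.mono' (integrable_const (Real.exp (t * M₀)))
      (((hYmeas k).const_mul (-t)).exp).aestronglyMeasurable ?_
    filter_upwards [hYM k] with ω hω
    rw [Real.norm_eq_abs, Real.abs_exp]
    apply Real.exp_le_exp.2
    calc -t * Y k ω ≤ |(-t) * Y k ω| := le_abs_self _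
      _ = t * |Y k ω| := by rw [abs_mul, abs_neg, abs_of_pos htpos]
      _ ≤ t * M₀ := by nlinarith [abs_nonneg (Y k ω)]
  -- mgf bound per variable
  have hmgf : ∀ k, mgf (Y k) P (-t) ≤ Real.exp (-(t*m/2)) := by
    intro k
    have hptw : ∀ᵐ ω ∂P, Real.exp (-t * Y k ω) ≤
        1 + (-t * Y k ω) + (-t * Y k ω)^2 := by
      filter_upwards [hYM k] with ω hω
      apply exp_le_one_add_add_sq'
      rw [abs_mul, abs_neg, abs_of_pos htpos]
      calc t * |Y k ω| ≤ t * M₀ := by nlinarith [abs_nonneg (Y k ω)]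
        _ ≤ 1 := htM
    have hquadint : Integrable (fun ω => 1 + (-t * Y k ω) + (-t * Y k ω)^2) P := by
      apply Integrable.add
      apply Integrable.add (integrable_const 1) ((hYint k).const_mul (-t))
      have : (fun ω => (-t * Y k ω)^2) = fun ω => t^2 * (Y k ω)^2 := by
        funext ω; ring
      rw [this]
      exact (hY2int k).const_mul _
    have h1 : mgf (Y k) P (-t) ≤ ∫ ω, (1 + (-t * Y k ω) + (-t * Y k ω)^2) ∂P := by
      exact integral_mono_ae (hexpint k) hquadint hptw
    have h2 : ∫ ω, (1 + (-t * Y k ω) + (-t * Y k ω)^2) ∂P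
        = 1 + (-t) * ∫ ω, Y k ω ∂P + t^2 * ∫ ω, (Y k ω)^2 ∂P := by
      have A : Integrable (fun ω => 1 + (-t * Y k ω)) P :=
        (integrable_const 1).add ((hYint k).const_mul (-t))
      have B : Integrable (fun ω => (-t * Y k ω)^2) P := by
        have e : (fun ω => (-t * Y k ω)^2) = fun ω => t^2 * (Y k ω)^2 := by
          funext ω; ring
        rw [e]; exact (hY2int k).const_mul _
      have e2 : ∫ ω, (-t * Y k ω)^2 ∂P = t^2 * ∫ ω, (Y k ω)^2 ∂P := by
        rw [← integral_const_mul]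
        congr 1; funext ω; ring
      rw [integral_add A B, integral_add (integrable_const 1) ((hYint k).const_mul (-t)),
        integral_const, integral_const_mul, e2]
      simp [measure_univ]
    have h3 : 1 + (-t) * ∫ ω, Y k ω ∂P + t^2 * ∫ ω, (Y k ω)^2 ∂P ≤ 1 - t*m/2 := by
      have ha := hEYm k
      have hb := hEY2 k
      nlinarith [htm, htpos]
    have h4 : 1 - t*m/2 ≤ Real.exp (-(t*m/2)) := by
      have := Real.add_one_le_exp (-(t*m/2)); linarith
    calc mgf (Y k) P (-t) ≤ _ := h1
      _ = _ := h2
      _ ≤ 1 - t*m/2 := h3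
      _ ≤ _ := h4
  -- now the main estimate
  rw [eventually_atTop]
  refine ⟨⌈4/m⌉₊ + 1, fun n hn => ?_⟩
  have hnm : 4/m ≤ (n : ℝ) := by
    calc (4/m : ℝ) ≤ (⌈4/m⌉₊ : ℝ) := Nat.le_ceil _
      _ ≤ n := by exact_mod_cast le_trans (Nat.le_succ _) hn
  -- event comparison
  have hgoodall : ∀ᵐ ω ∂P, ∀ k, X k ω ∈ S := ae_all_iff.2 hgood
  have hsub : {ω | Real.log (‖∏ k ∈ Finset.range n, (z - X k ω)‖) ≤ 1}
      ≤ᵐ[P] {ω | (∑ k ∈ Finset.range n, Y k) ω ≤ 1} := by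
    filter_upwards [hgoodall] with ω hω hle
    have hne : ∀ k ∈ Finset.range n, ‖z - X k ω‖ ≠ 0 := by
      intro k _
      exact ne_of_gt (lt_of_lt_of_le hδpos (hsep z hz _ (hω k)).1)
    show (∑ k ∈ Finset.range n, Y k) ω ≤ 1
    rw [Finset.sum_apply]
    have heq : ∑ k ∈ Finset.range n, Y k ω
        = Real.log (‖∏ k ∈ Finset.range n, (z - X k ω)‖) := by
      simp only [hYdef]
      rw [Complex.norm_prod, Real.log_prod hne]
    rw [heq]; exact hle
  have hindep' : iIndepFun Y P := by
    exact hindep.comp (fun k w => Real.log (‖z - w‖))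
      (fun k => Real.measurable_log.comp
        (continuous_norm.measurable.comp (measurable_const.sub measurable_id)))
  have hsumint : Integrable (fun ω => Real.exp (-t * (∑ k ∈ Finset.range n, Y k) ω)) P := by
    exact hindep'.integrable_exp_mul_sum (fun k => hYmeas k) (fun k _ => hexpint k)
  have hkey := measure_le_le_exp_mul_mgf (μ := P) (X := ∑ k ∈ Finset.range n, Y k)
    (t := -t) 1 (by linarith) hsumint
  have hmgfsum : mgf (∑ k ∈ Finset.range n, Y k) P (-t) ≤ Real.exp (-(t*m/2)) ^ n := by
    rw [hindep'.mgf_sum hYmeas]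
    calc ∏ k ∈ Finset.range n, mgf (Y k) P (-t)
        ≤ ∏ k ∈ Finset.range n, Real.exp (-(t*m/2)) :=
          Finset.prod_le_prod (fun k _ => mgf_nonneg) (fun k _ => hmgf k)
      _ = Real.exp (-(t*m/2)) ^ n := by rw [Finset.prod_const, Finset.card_range]
  have hfinal : (P {ω | (∑ k ∈ Finset.range n, Y k) ω ≤ 1}).toReal
      ≤ Real.exp (-(t*m/4) * n) := by
    refine hkey.trans ?_
    have e1 : Real.exp (-(-t) * 1) * Real.exp (-(t*m/2)) ^ n
        = Real.exp (t + (-(t*m/2)) * n) := by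
      rw [← Real.exp_nat_mul, ← Real.exp_add]
      ring_nf
    calc Real.exp (-(-t) * 1) * mgf (∑ k ∈ Finset.range n, Y k) P (-t)
        ≤ Real.exp (-(-t) * 1) * Real.exp (-(t*m/2)) ^ n := by
          apply mul_le_mul_of_nonneg_left hmgfsum (Real.exp_pos _).le
      _ = Real.exp (t + (-(t*m/2)) * n) := e1
      _ ≤ Real.exp (-(t*m/4) * n) := by
          apply Real.exp_le_exp.2
          have h4 : (4:ℝ) ≤ m * n := by
            rw [div_le_iff₀ hmpos] at hnm
            linarith [hnm]
          nlinarith [htpos, hmpos]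
  calc P {ω | Real.log (‖∏ k ∈ Finset.range n, (z - X k ω)‖) ≤ 1}
      ≤ P {ω | (∑ k ∈ Finset.range n, Y k) ω ≤ 1} := measure_mono_ae hsub
    _ = ENNReal.ofReal ((P {ω | (∑ k ∈ Finset.range n, Y k) ω ≤ 1}).toReal) :=
        (ENNReal.ofReal_toReal (measure_ne_top _ _)).symm
    _ ≤ ENNReal.ofReal (Real.exp (-(t*m/4) * n)) := ENNReal.ofReal_le_ofReal hfinal
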